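/- In an MPBKP-SS instance, the expected profit is submodular in the following sense: for any sets S₁ ⊆ S₂ ⊆ {1,…,n} and any set S₃ disjoint from S₂, ΔP(S₁, S₃) ≥ ΔP(S₂, S₃). -/

import Mathlib

open scoped BigOperators

/-- Overflow of a set `S` on a capacity path `c`:
`Φ(S) = max_{0 ≤ t ≤ T} ( ∑_{i ∈ S : d_i ≤ t} q_i - c_t )`. -/
noncomputable def overflowPath {n : ℕ} (T : ℕ) (c : ℕ → ℝ) (q : Fin n → ℝ) (d : Fin n → ℕ)
    (S : Finset (Fin n)) : ℝ :=
  (Finset.range (T + 1)).sup' ⟨0, Finset.mem_range.mpr (Nat.succ_pos T)⟩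
    fun t => (∑ i ∈ S.filter (fun i => d i ≤ t), q i) - c t

/-- Expected profit `P(S) = R(S) - B·∑_ω p(ω)·Φ_ω(S)` of an MPBKP-SS instance. -/
noncomputable def eprofit {n : ℕ} {Ω : Type*} [Fintype Ω] (T : ℕ) (c : Ω → ℕ → ℝ) (p : Ω → ℝ)
    (B : ℝ) (r q : Fin n → ℝ) (d : Fin n → ℕ) (S : Finset (Fin n)) : ℝ :=
  (∑ i ∈ S, r i) - B * ∑ ω, p ω * overflowPath T (c ω) q d S

lemma sumq_union {n : ℕ} (q : Fin n → ℝ) (d : Fin n → ℕ) {S S' : Finset (Fin n)}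
    (h : Disjoint S S') (t : ℕ) :
    ∑ i ∈ (S ∪ S').filter (fun i => d i ≤ t), q i
      = (∑ i ∈ S.filter (fun i => d i ≤ t), q i) + ∑ i ∈ S'.filter (fun i => d i ≤ t), q i := by
  rw [Finset.filter_union, Finset.sum_union (Finset.disjoint_filter_filter h)]

lemma sumq_mono_t {n : ℕ} (q : Fin n → ℝ) (hq : ∀ i, 0 ≤ q i) (d : Fin n → ℕ)
    (S : Finset (Fin n)) {s t : ℕ} (h : s ≤ t) :
    ∑ i ∈ S.filter (fun i => d i ≤ s), q i ≤ ∑ i ∈ S.filter (fun i => d i ≤ t), q i :=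
  Finset.sum_le_sum_of_subset_of_nonneg
    (Finset.monotone_filter_right S (fun i _ hi => le_trans hi h))
    (fun i _ _ => hq i)

lemma overflow_supermod {n : ℕ} (T : ℕ) (c : ℕ → ℝ) (q : Fin n → ℝ) (hq : ∀ i, 0 ≤ q i)
    (d : Fin n → ℕ) (S₁ S₂ S₃ : Finset (Fin n)) (hsub : S₁ ⊆ S₂) (hdisj : Disjoint S₂ S₃) :
    overflowPath T c q d (S₁ ∪ S₃) + overflowPath T c q d S₂ ≤
      overflowPath T c q d (S₂ ∪ S₃) + overflowPath T c q d S₁ := by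
  have hne : ((Finset.range (T+1)).Nonempty) := ⟨0, Finset.mem_range.mpr (Nat.succ_pos T)⟩
  have h13 : Disjoint S₁ S₃ := Finset.disjoint_of_subset_left hsub hdisj
  obtain ⟨t, ht, htEq⟩ := Finset.exists_mem_eq_sup' hne
    (fun t => (∑ i ∈ (S₁ ∪ S₃).filter (fun i => d i ≤ t), q i) - c t)
  obtain ⟨s, hs, hsEq⟩ := Finset.exists_mem_eq_sup' hne
    (fun t => (∑ i ∈ S₂.filter (fun i => d i ≤ t), q i) - c t)
  have hU1 : overflowPath T c q d (S₁ ∪ S₃)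
      = (∑ i ∈ S₁.filter (fun i => d i ≤ t), q i)
        + (∑ i ∈ S₃.filter (fun i => d i ≤ t), q i) - c t := by
    rw [overflowPath, ← htEq.symm, sumq_union q d h13]
  have hU2 : overflowPath T c q d S₂ = (∑ i ∈ S₂.filter (fun i => d i ≤ s), q i) - c s := by
    rw [overflowPath, ← hsEq.symm]
  rcases le_total t s with hts | hst
  · have h1 : (∑ i ∈ S₂.filter (fun i => d i ≤ s), q i)
        + (∑ i ∈ S₃.filter (fun i => d i ≤ s), q i) - c s
        ≤ overflowPath T c q d (S₂ ∪ S₃) := by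
      rw [overflowPath]
      calc _ = (∑ i ∈ (S₂ ∪ S₃).filter (fun i => d i ≤ s), q i) - c s := by
              rw [sumq_union q d hdisj]
        _ ≤ _ := Finset.le_sup' (fun u => (∑ i ∈ (S₂ ∪ S₃).filter (fun i => d i ≤ u), q i) - c u) hs
    have h2 : (∑ i ∈ S₃.filter (fun i => d i ≤ t), q i)
        ≤ ∑ i ∈ S₃.filter (fun i => d i ≤ s), q i := sumq_mono_t q hq d S₃ hts
    have h3 : (∑ i ∈ S₁.filter (fun i => d i ≤ t), q i) - c t ≤ overflowPath T c q d S₁ := by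
      rw [overflowPath]; exact Finset.le_sup' (fun u => (∑ i ∈ S₁.filter (fun i => d i ≤ u), q i) - c u) ht
    linarith
  · have h1 : (∑ i ∈ S₂.filter (fun i => d i ≤ t), q i)
        + (∑ i ∈ S₃.filter (fun i => d i ≤ t), q i) - c t
        ≤ overflowPath T c q d (S₂ ∪ S₃) := by
      rw [overflowPath]
      calc _ = (∑ i ∈ (S₂ ∪ S₃).filter (fun i => d i ≤ t), q i) - c t := by
              rw [sumq_union q d hdisj]
        _ ≤ _ := Finset.le_sup' (fun u => (∑ i ∈ (S₂ ∪ S₃).filter (fun i => d i ≤ u), q i) - c u) ht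
    have h2 : (∑ i ∈ S₁.filter (fun i => d i ≤ s), q i) - c s ≤ overflowPath T c q d S₁ := by
      rw [overflowPath]; exact Finset.le_sup' (fun u => (∑ i ∈ S₁.filter (fun i => d i ≤ u), q i) - c u) hs
    have hdS : Disjoint S₁ (S₂ \ S₁) := Finset.disjoint_sdiff
    have hsplit : ∀ u : ℕ, ∑ i ∈ S₂.filter (fun i => d i ≤ u), q i
        = (∑ i ∈ S₁.filter (fun i => d i ≤ u), q i)
          + ∑ i ∈ (S₂ \ S₁).filter (fun i => d i ≤ u), q i := by
      intro u
      rw [← sumq_union q d hdS u, Finset.union_sdiff_of_subset hsub]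
    have hmono' : (∑ i ∈ (S₂ \ S₁).filter (fun i => d i ≤ s), q i)
        ≤ ∑ i ∈ (S₂ \ S₁).filter (fun i => d i ≤ t), q i := sumq_mono_t q hq d _ hst
    have e1 := hsplit s
    have e2 := hsplit t
    linarith

/-- Submodularity of the expected profit of an MPBKP-SS instance: for `S₁ ⊆ S₂` and `S₃`
disjoint from `S₂`, `ΔP(S₁,S₃) ≥ ΔP(S₂,S₃)`. -/
theorem stmt9 {n : ℕ} {Ω : Type*} [Fintype Ω] (T : ℕ) (hT : 1 ≤ T)
    (c : Ω → ℕ → ℝ) (hc0 : ∀ ω, c ω 0 = 0)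
    (hmono : ∀ ω, ∀ s t, s ≤ t → t ≤ T → c ω s ≤ c ω t)
    (p : Ω → ℝ) (hp : ∀ ω, 0 ≤ p ω) (hpsum : ∑ ω, p ω = 1)
    (B : ℝ) (hB : 0 < B)
    (r q : Fin n → ℝ) (hr : ∀ i, 0 < r i) (hq : ∀ i, 0 < q i)
    (d : Fin n → ℕ) (hd : ∀ i, 1 ≤ d i ∧ d i ≤ T)
    (S₁ S₂ S₃ : Finset (Fin n)) (hsub : S₁ ⊆ S₂) (hdisj : Disjoint S₂ S₃) :
    eprofit T c p B r q d (S₂ ∪ S₃) - eprofit T c p B r q d S₂ ≤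
      eprofit T c p B r q d (S₁ ∪ S₃) - eprofit T c p B r q d S₁ := by
  have h13 : Disjoint S₁ S₃ := Finset.disjoint_of_subset_left hsub hdisj
  have hq' : ∀ i, 0 ≤ q i := fun i => (hq i).le
  have hsum : ∑ ω, p ω * (overflowPath T (c ω) q d (S₁ ∪ S₃) + overflowPath T (c ω) q d S₂)
      ≤ ∑ ω, p ω * (overflowPath T (c ω) q d (S₂ ∪ S₃) + overflowPath T (c ω) q d S₁) :=
    Finset.sum_le_sum fun ω _ => mul_le_mul_of_nonneg_left
      (overflow_supermod T (c ω) q hq' d S₁ S₂ S₃ hsub hdisj) (hp ω)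
  simp only [mul_add, Finset.sum_add_distrib] at hsum
  have hsum' := mul_le_mul_of_nonneg_left hsum hB.le
  simp only [eprofit, Finset.sum_union hdisj, Finset.sum_union h13, mul_add] at *
  linarith
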